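/- Let A and B be self-dual complex two-forms on Minkowski space with invariants a, b and mixed invariant k. Then exp(A)·exp(B) = (cosh(a)·cosh(b) + k·SH(a)·SH(b))·I + SH(a)·cosh(b)·A + cosh(a)·SH(b)·B + (1/2)·SH(a)·SH(b)·[A,B]. -/

import Mathlib

open Matrix

noncomputable section

/-- The Minkowski metric matrix `diag(1,-1,-1,-1)`. -/
def minkEta : Matrix (Fin 4) (Fin 4) ℂ := Matrix.diagonal ![1, -1, -1, -1]

/-- The Levi-Civita symbol `ε(i,j,k,l)`: the sign of `(i,j,k,l)` as a permutation of
`(0,1,2,3)`, and `0` if the indices are not all distinct; `ε(0,1,2,3) = 1`. -/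
def eps (i j k l : Fin 4) : ℂ :=
  Matrix.det (Matrix.of ![Pi.single i 1, Pi.single j 1, Pi.single k 1, Pi.single l 1])

/-- A (complex) two-form on Minkowski space: `Fᵀ·η + η·F = 0`. -/
def IsTwoForm (F : Matrix (Fin 4) (Fin 4) ℂ) : Prop :=
  Fᵀ * minkEta + minkEta * F = 0

/-- The Hodge dual of a two-form:
`(*F)^μ_ν = (1/2)·Σ η_{μρ}·ε(ρ,ν,σ,τ)·F^σ_λ·η_{λτ}`. -/
def dual (F : Matrix (Fin 4) (Fin 4) ℂ) : Matrix (Fin 4) (Fin 4) ℂ :=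
  Matrix.of fun μ ν => (1/2 : ℂ) *
    ∑ ρ : Fin 4, ∑ σ : Fin 4, ∑ lam : Fin 4, ∑ τ : Fin 4,
      minkEta μ ρ * eps ρ ν σ τ * F σ lam * minkEta lam τ

/-- A self-dual complex two-form: a two-form with `*A = i·A`. -/
def SelfDual (A : Matrix (Fin 4) (Fin 4) ℂ) : Prop :=
  IsTwoForm A ∧ dual A = Complex.I • A

/-- An anti-self-dual complex two-form: a two-form with `*A = -i·A`. -/
def AntiSelfDual (A : Matrix (Fin 4) (Fin 4) ℂ) : Prop :=
  IsTwoForm A ∧ dual A = (-Complex.I) • A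

/-- A matrix with real entries. -/
def RealEntries (F : Matrix (Fin 4) (Fin 4) ℂ) : Prop :=
  ∀ i j, (F i j).im = 0

/-- `SH z = sinh z / z` for `z ≠ 0` and `SH 0 = 1`. -/
def SH (z : ℂ) : ℂ := if z = 0 then 1 else Complex.sinh z / z

/-! ### Auxiliary material -/

/-- Integer-valued Levi-Civita symbol. -/
def epsZ (i j k l : Fin 4) : ℤ :=
  Matrix.det (Matrix.of ![Pi.single i 1, Pi.single j 1, Pi.single k 1, Pi.single l 1])

lemma eps_eq (i j k l : Fin 4) : eps i j k l = (epsZ i j k l : ℂ) := by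
  have h := (RingHom.map_det (Int.castRingHom ℂ)
    (Matrix.of ![Pi.single i 1, Pi.single j 1, Pi.single k 1, Pi.single l 1]))
  rw [eps, epsZ, show ((Matrix.det (Matrix.of ![Pi.single i (1:ℤ), Pi.single j 1, Pi.single k 1,
      Pi.single l 1]) : ℤ) : ℂ) = (Int.castRingHom ℂ) (Matrix.det (Matrix.of ![Pi.single i (1:ℤ),
      Pi.single j 1, Pi.single k 1, Pi.single l 1])) from rfl, h]
  congr 1
  ext r c
  fin_cases r <;> simp [Matrix.map_apply, Pi.single_apply]
@[simp] lemma eps_0000 : eps 0 0 0 0 = 0 := by rw [eps_eq, show epsZ 0 0 0 0 = 0 from by decide]; norm_num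
@[simp] lemma eps_0001 : eps 0 0 0 1 = 0 := by rw [eps_eq, show epsZ 0 0 0 1 = 0 from by decide]; norm_num
@[simp] lemma eps_0002 : eps 0 0 0 2 = 0 := by rw [eps_eq, show epsZ 0 0 0 2 = 0 from by decide]; norm_num
@[simp] lemma eps_0003 : eps 0 0 0 3 = 0 := by rw [eps_eq, show epsZ 0 0 0 3 = 0 from by decide]; norm_num
@[simp] lemma eps_0010 : eps 0 0 1 0 = 0 := by rw [eps_eq, show epsZ 0 0 1 0 = 0 from by decide]; norm_num
@[simp] lemma eps_0011 : eps 0 0 1 1 = 0 := by rw [eps_eq, show epsZ 0 0 1 1 = 0 from by decide]; norm_num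
@[simp] lemma eps_0012 : eps 0 0 1 2 = 0 := by rw [eps_eq, show epsZ 0 0 1 2 = 0 from by decide]; norm_num
@[simp] lemma eps_0013 : eps 0 0 1 3 = 0 := by rw [eps_eq, show epsZ 0 0 1 3 = 0 from by decide]; norm_num
@[simp] lemma eps_0020 : eps 0 0 2 0 = 0 := by rw [eps_eq, show epsZ 0 0 2 0 = 0 from by decide]; norm_num
@[simp] lemma eps_0021 : eps 0 0 2 1 = 0 := by rw [eps_eq, show epsZ 0 0 2 1 = 0 from by decide]; norm_num
@[simp] lemma eps_0022 : eps 0 0 2 2 = 0 := by rw [eps_eq, show epsZ 0 0 2 2 = 0 from by decide]; norm_num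
@[simp] lemma eps_0023 : eps 0 0 2 3 = 0 := by rw [eps_eq, show epsZ 0 0 2 3 = 0 from by decide]; norm_num
@[simp] lemma eps_0030 : eps 0 0 3 0 = 0 := by rw [eps_eq, show epsZ 0 0 3 0 = 0 from by decide]; norm_num
@[simp] lemma eps_0031 : eps 0 0 3 1 = 0 := by rw [eps_eq, show epsZ 0 0 3 1 = 0 from by decide]; norm_num
@[simp] lemma eps_0032 : eps 0 0 3 2 = 0 := by rw [eps_eq, show epsZ 0 0 3 2 = 0 from by decide]; norm_num
@[simp] lemma eps_0033 : eps 0 0 3 3 = 0 := by rw [eps_eq, show epsZ 0 0 3 3 = 0 from by decide]; norm_num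
@[simp] lemma eps_0100 : eps 0 1 0 0 = 0 := by rw [eps_eq, show epsZ 0 1 0 0 = 0 from by decide]; norm_num
@[simp] lemma eps_0101 : eps 0 1 0 1 = 0 := by rw [eps_eq, show epsZ 0 1 0 1 = 0 from by decide]; norm_num
@[simp] lemma eps_0102 : eps 0 1 0 2 = 0 := by rw [eps_eq, show epsZ 0 1 0 2 = 0 from by decide]; norm_num
@[simp] lemma eps_0103 : eps 0 1 0 3 = 0 := by rw [eps_eq, show epsZ 0 1 0 3 = 0 from by decide]; norm_num
@[simp] lemma eps_0110 : eps 0 1 1 0 = 0 := by rw [eps_eq, show epsZ 0 1 1 0 = 0 from by decide]; norm_num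
@[simp] lemma eps_0111 : eps 0 1 1 1 = 0 := by rw [eps_eq, show epsZ 0 1 1 1 = 0 from by decide]; norm_num
@[simp] lemma eps_0112 : eps 0 1 1 2 = 0 := by rw [eps_eq, show epsZ 0 1 1 2 = 0 from by decide]; norm_num
@[simp] lemma eps_0113 : eps 0 1 1 3 = 0 := by rw [eps_eq, show epsZ 0 1 1 3 = 0 from by decide]; norm_num
@[simp] lemma eps_0120 : eps 0 1 2 0 = 0 := by rw [eps_eq, show epsZ 0 1 2 0 = 0 from by decide]; norm_num
@[simp] lemma eps_0121 : eps 0 1 2 1 = 0 := by rw [eps_eq, show epsZ 0 1 2 1 = 0 from by decide]; norm_num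
@[simp] lemma eps_0122 : eps 0 1 2 2 = 0 := by rw [eps_eq, show epsZ 0 1 2 2 = 0 from by decide]; norm_num
@[simp] lemma eps_0123 : eps 0 1 2 3 = 1 := by rw [eps_eq, show epsZ 0 1 2 3 = 1 from by decide]; norm_num
@[simp] lemma eps_0130 : eps 0 1 3 0 = 0 := by rw [eps_eq, show epsZ 0 1 3 0 = 0 from by decide]; norm_num
@[simp] lemma eps_0131 : eps 0 1 3 1 = 0 := by rw [eps_eq, show epsZ 0 1 3 1 = 0 from by decide]; norm_num
@[simp] lemma eps_0132 : eps 0 1 3 2 = -1 := by rw [eps_eq, show epsZ 0 1 3 2 = -1 from by decide]; norm_num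
@[simp] lemma eps_0133 : eps 0 1 3 3 = 0 := by rw [eps_eq, show epsZ 0 1 3 3 = 0 from by decide]; norm_num
@[simp] lemma eps_0200 : eps 0 2 0 0 = 0 := by rw [eps_eq, show epsZ 0 2 0 0 = 0 from by decide]; norm_num
@[simp] lemma eps_0201 : eps 0 2 0 1 = 0 := by rw [eps_eq, show epsZ 0 2 0 1 = 0 from by decide]; norm_num
@[simp] lemma eps_0202 : eps 0 2 0 2 = 0 := by rw [eps_eq, show epsZ 0 2 0 2 = 0 from by decide]; norm_num
@[simp] lemma eps_0203 : eps 0 2 0 3 = 0 := by rw [eps_eq, show epsZ 0 2 0 3 = 0 from by decide]; norm_num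
@[simp] lemma eps_0210 : eps 0 2 1 0 = 0 := by rw [eps_eq, show epsZ 0 2 1 0 = 0 from by decide]; norm_num
@[simp] lemma eps_0211 : eps 0 2 1 1 = 0 := by rw [eps_eq, show epsZ 0 2 1 1 = 0 from by decide]; norm_num
@[simp] lemma eps_0212 : eps 0 2 1 2 = 0 := by rw [eps_eq, show epsZ 0 2 1 2 = 0 from by decide]; norm_num
@[simp] lemma eps_0213 : eps 0 2 1 3 = -1 := by rw [eps_eq, show epsZ 0 2 1 3 = -1 from by decide]; norm_num
@[simp] lemma eps_0220 : eps 0 2 2 0 = 0 := by rw [eps_eq, show epsZ 0 2 2 0 = 0 from by decide]; norm_num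
@[simp] lemma eps_0221 : eps 0 2 2 1 = 0 := by rw [eps_eq, show epsZ 0 2 2 1 = 0 from by decide]; norm_num
@[simp] lemma eps_0222 : eps 0 2 2 2 = 0 := by rw [eps_eq, show epsZ 0 2 2 2 = 0 from by decide]; norm_num
@[simp] lemma eps_0223 : eps 0 2 2 3 = 0 := by rw [eps_eq, show epsZ 0 2 2 3 = 0 from by decide]; norm_num
@[simp] lemma eps_0230 : eps 0 2 3 0 = 0 := by rw [eps_eq, show epsZ 0 2 3 0 = 0 from by decide]; norm_num
@[simp] lemma eps_0231 : eps 0 2 3 1 = 1 := by rw [eps_eq, show epsZ 0 2 3 1 = 1 from by decide]; norm_num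
@[simp] lemma eps_0232 : eps 0 2 3 2 = 0 := by rw [eps_eq, show epsZ 0 2 3 2 = 0 from by decide]; norm_num
@[simp] lemma eps_0233 : eps 0 2 3 3 = 0 := by rw [eps_eq, show epsZ 0 2 3 3 = 0 from by decide]; norm_num
@[simp] lemma eps_0300 : eps 0 3 0 0 = 0 := by rw [eps_eq, show epsZ 0 3 0 0 = 0 from by decide]; norm_num
@[simp] lemma eps_0301 : eps 0 3 0 1 = 0 := by rw [eps_eq, show epsZ 0 3 0 1 = 0 from by decide]; norm_num
@[simp] lemma eps_0302 : eps 0 3 0 2 = 0 := by rw [eps_eq, show epsZ 0 3 0 2 = 0 from by decide]; norm_num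
@[simp] lemma eps_0303 : eps 0 3 0 3 = 0 := by rw [eps_eq, show epsZ 0 3 0 3 = 0 from by decide]; norm_num
@[simp] lemma eps_0310 : eps 0 3 1 0 = 0 := by rw [eps_eq, show epsZ 0 3 1 0 = 0 from by decide]; norm_num
@[simp] lemma eps_0311 : eps 0 3 1 1 = 0 := by rw [eps_eq, show epsZ 0 3 1 1 = 0 from by decide]; norm_num
@[simp] lemma eps_0312 : eps 0 3 1 2 = 1 := by rw [eps_eq, show epsZ 0 3 1 2 = 1 from by decide]; norm_num
@[simp] lemma eps_0313 : eps 0 3 1 3 = 0 := by rw [eps_eq, show epsZ 0 3 1 3 = 0 from by decide]; norm_num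
@[simp] lemma eps_0320 : eps 0 3 2 0 = 0 := by rw [eps_eq, show epsZ 0 3 2 0 = 0 from by decide]; norm_num
@[simp] lemma eps_0321 : eps 0 3 2 1 = -1 := by rw [eps_eq, show epsZ 0 3 2 1 = -1 from by decide]; norm_num
@[simp] lemma eps_0322 : eps 0 3 2 2 = 0 := by rw [eps_eq, show epsZ 0 3 2 2 = 0 from by decide]; norm_num
@[simp] lemma eps_0323 : eps 0 3 2 3 = 0 := by rw [eps_eq, show epsZ 0 3 2 3 = 0 from by decide]; norm_num
@[simp] lemma eps_0330 : eps 0 3 3 0 = 0 := by rw [eps_eq, show epsZ 0 3 3 0 = 0 from by decide]; norm_num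
@[simp] lemma eps_0331 : eps 0 3 3 1 = 0 := by rw [eps_eq, show epsZ 0 3 3 1 = 0 from by decide]; norm_num
@[simp] lemma eps_0332 : eps 0 3 3 2 = 0 := by rw [eps_eq, show epsZ 0 3 3 2 = 0 from by decide]; norm_num
@[simp] lemma eps_0333 : eps 0 3 3 3 = 0 := by rw [eps_eq, show epsZ 0 3 3 3 = 0 from by decide]; norm_num

/-- The generic self-dual matrix. -/
def sdM (e1 e2 e3 : ℂ) : Matrix (Fin 4) (Fin 4) ℂ :=
  !![0, e1, e2, e3;
     e1, 0, -Complex.I*e3, Complex.I*e2;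
     e2, Complex.I*e3, 0, -Complex.I*e1;
     e3, -Complex.I*e2, Complex.I*e1, 0]

lemma selfDual_repr {A : Matrix (Fin 4) (Fin 4) ℂ} (hA : SelfDual A) :
    A = sdM (A 0 1) (A 0 2) (A 0 3) := by
  have htf : Aᵀ * minkEta + minkEta * A = 0 := hA.1
  have ht : ∀ i j, (Aᵀ * minkEta + minkEta * A) i j = 0 := by
    intro i j; rw [htf]; rfl
  have hd : ∀ j, dual A 0 j = Complex.I * A 0 j := by
    intro j
    rw [hA.2]; rfl
  have t00 := ht 0 0
  have t11 := ht 1 1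
  have t22 := ht 2 2
  have t33 := ht 3 3
  have t01 := ht 0 1
  have t02 := ht 0 2
  have t03 := ht 0 3
  have t12 := ht 1 2
  have t13 := ht 1 3
  have t23 := ht 2 3
  simp [Matrix.mul_apply, Fin.sum_univ_four, minkEta, Matrix.diagonal_apply]
    at t00 t11 t22 t33 t01 t02 t03 t12 t13 t23
  have h1 := hd 1
  have h2 := hd 2
  have h3 := hd 3
  simp [dual, Fin.sum_univ_four, minkEta, Matrix.diagonal_apply] at h1 h2 h3
  ext i j
  fin_cases i <;> fin_cases j <;> simp [sdM]
  · linear_combination t00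
  · linear_combination -t01
  · linear_combination t11
  · linear_combination -h3 - t12/2
  · linear_combination h2 - t13/2
  · linear_combination -t02
  · linear_combination h3 - t12/2
  · linear_combination t22
  · linear_combination -h1 - t23/2
  · linear_combination -t03
  · linear_combination -h2 - t13/2
  · linear_combination h1 - t23/2
  · linear_combination t33

set_option maxHeartbeats 8000000 in
lemma sdM_mul_add (e1 e2 e3 f1 f2 f3 : ℂ) :
    sdM e1 e2 e3 * sdM f1 f2 f3 + sdM f1 f2 f3 * sdM e1 e2 e3
      = (2 * (e1*f1 + e2*f2 + e3*f3)) • (1 : Matrix (Fin 4) (Fin 4) ℂ) := by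
  ext i j
  fin_cases i <;> fin_cases j <;>
    simp [sdM, Matrix.mul_apply, Fin.sum_univ_four, Matrix.one_apply, Matrix.smul_apply] <;>
    (try ring_nf) <;> (try simp [Complex.I_sq]) <;> (try ring)

set_option maxHeartbeats 2000000 in
lemma trace_sdM_mul (e1 e2 e3 f1 f2 f3 : ℂ) :
    Matrix.trace (sdM e1 e2 e3 * sdM f1 f2 f3) = 4 * (e1*f1 + e2*f2 + e3*f3) := by
  simp [Matrix.trace, Fin.sum_univ_four, Matrix.diag, sdM, Matrix.mul_apply]
  ring_nf
  simp [Complex.I_sq]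
  ring

open scoped Nat in
lemma hasSum_SH (a : ℂ) : HasSum (fun n : ℕ => a ^ (2 * n) / ((2 * n + 1)! : ℂ)) (SH a) := by
  rcases eq_or_ne a 0 with rfl | ha
  · rw [SH]
    simp only [if_pos rfl]
    have h0 : (fun n : ℕ => (0:ℂ) ^ (2 * n) / ((2 * n + 1)! : ℂ))
        = fun n : ℕ => if n = 0 then 1 else 0 := by
      funext n
      rcases Nat.eq_zero_or_pos n with rfl | hn
      · norm_num
      · rw [if_neg hn.ne', zero_pow (by omega), zero_div]
    rw [h0]
    simpa using hasSum_ite_eq (0 : ℕ) (1 : ℂ)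
  · rw [SH, if_neg ha]
    have h := (Complex.hasSum_sinh a).div_const a
    convert h using 2 with n
    · rfl
    rw [pow_succ, mul_div_assoc, mul_div_assoc, div_right_comm, div_self ha, one_div,
      ← div_eq_mul_inv]

lemma matrix_exp_of_sq (M : Matrix (Fin 4) (Fin 4) ℂ) (c : ℂ)
    (h : M * M = (c ^ 2) • (1 : Matrix (Fin 4) (Fin 4) ℂ)) :
    NormedSpace.exp M = Complex.cosh c • (1 : Matrix (Fin 4) (Fin 4) ℂ) + SH c • M := by
  letI : SeminormedRing (Matrix (Fin 4) (Fin 4) ℂ) := Matrix.linftyOpSemiNormedRing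
  letI : NormedRing (Matrix (Fin 4) (Fin 4) ℂ) := Matrix.linftyOpNormedRing
  letI : NormedAlgebra ℂ (Matrix (Fin 4) (Fin 4) ℂ) := Matrix.linftyOpNormedAlgebra
  have hpow_even : ∀ n : ℕ, M ^ (2 * n) = (c ^ (2 * n)) • (1 : Matrix (Fin 4) (Fin 4) ℂ) := by
    intro n
    rw [pow_mul, pow_mul, show M ^ 2 = M * M from sq M, h, smul_pow, one_pow, ← pow_mul]
  have hpow_odd : ∀ n : ℕ, M ^ (2 * n + 1) = (c ^ (2 * n)) • M := by
    intro n
    rw [pow_succ, hpow_even, smul_mul_assoc, one_mul]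
  rw [NormedSpace.exp_eq_tsum ℂ]
  refine HasSum.tsum_eq ?_
  refine HasSum.even_add_odd ?_ ?_
  · have hc := (Complex.hasSum_cosh c).smul_const (1 : Matrix (Fin 4) (Fin 4) ℂ)
    convert hc using 2 with n
    · rfl
    rw [hpow_even, smul_smul]
    congr 1
    rw [div_eq_mul_inv, mul_comm]
  · have hs := (hasSum_SH c).smul_const M
    convert hs using 2 with n
    · rfl
    rw [hpow_odd, smul_smul]
    congr 1
    rw [div_eq_mul_inv, mul_comm]

/-- Product of exponentials of two self-dual two-forms. -/
theorem selfDual_exp_mul_exp (A B : Matrix (Fin 4) (Fin 4) ℂ)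
    (hA : SelfDual A) (hB : SelfDual B) (a b k : ℂ)
    (ha : a ^ 2 = (1/4 : ℂ) * Matrix.trace (A * A))
    (hb : b ^ 2 = (1/4 : ℂ) * Matrix.trace (B * B))
    (hk : k = (1/4 : ℂ) * Matrix.trace (A * B)) :
    NormedSpace.exp A * NormedSpace.exp B
      = (Complex.cosh a * Complex.cosh b + k * SH a * SH b) • (1 : Matrix (Fin 4) (Fin 4) ℂ)
        + (SH a * Complex.cosh b) • A + (Complex.cosh a * SH b) • B
        + ((1/2 : ℂ) * SH a * SH b) • (A * B - B * A) := by
  have hrA := selfDual_repr hA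
  have hrB := selfDual_repr hB
  -- squares
  have hAAt := trace_sdM_mul (A 0 1) (A 0 2) (A 0 3) (A 0 1) (A 0 2) (A 0 3)
  rw [← hrA] at hAAt
  have hBBt := trace_sdM_mul (B 0 1) (B 0 2) (B 0 3) (B 0 1) (B 0 2) (B 0 3)
  rw [← hrB] at hBBt
  have hABt := trace_sdM_mul (A 0 1) (A 0 2) (A 0 3) (B 0 1) (B 0 2) (B 0 3)
  rw [← hrA, ← hrB] at hABt
  have ha' : a ^ 2 = A 0 1 * A 0 1 + A 0 2 * A 0 2 + A 0 3 * A 0 3 := by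
    rw [ha, hAAt]; ring
  have hb' : b ^ 2 = B 0 1 * B 0 1 + B 0 2 * B 0 2 + B 0 3 * B 0 3 := by
    rw [hb, hBBt]; ring
  have hk' : k = A 0 1 * B 0 1 + A 0 2 * B 0 2 + A 0 3 * B 0 3 := by
    rw [hk, hABt]; ring
  have hAAm := sdM_mul_add (A 0 1) (A 0 2) (A 0 3) (A 0 1) (A 0 2) (A 0 3)
  rw [← hrA] at hAAm
  have hBBm := sdM_mul_add (B 0 1) (B 0 2) (B 0 3) (B 0 1) (B 0 2) (B 0 3)
  rw [← hrB] at hBBm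
  have hABm := sdM_mul_add (A 0 1) (A 0 2) (A 0 3) (B 0 1) (B 0 2) (B 0 3)
  rw [← hrA, ← hrB] at hABm
  have hAA : A * A = (a ^ 2) • (1 : Matrix (Fin 4) (Fin 4) ℂ) := by
    rw [ha']
    linear_combination (norm := module) (2⁻¹ : ℂ) • hAAm
  have hBB : B * B = (b ^ 2) • (1 : Matrix (Fin 4) (Fin 4) ℂ) := by
    rw [hb']
    linear_combination (norm := module) (2⁻¹ : ℂ) • hBBm
  have hABsplit : A * B = k • (1 : Matrix (Fin 4) (Fin 4) ℂ)
      + (2⁻¹ : ℂ) • (A * B - B * A) := by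
    rw [hk']
    linear_combination (norm := module) (2⁻¹ : ℂ) • hABm
  have hexpA := matrix_exp_of_sq A a hAA
  have hexpB := matrix_exp_of_sq B b hBB
  rw [hexpA, hexpB]
  have hexpand : (Complex.cosh a • (1 : Matrix (Fin 4) (Fin 4) ℂ) + SH a • A)
        * (Complex.cosh b • (1 : Matrix (Fin 4) (Fin 4) ℂ) + SH b • B)
      = (Complex.cosh a * Complex.cosh b) • (1 : Matrix (Fin 4) (Fin 4) ℂ)
        + (SH a * Complex.cosh b) • A + (Complex.cosh a * SH b) • B
        + (SH a * SH b) • (A * B) := by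
    rw [add_mul, mul_add, mul_add, smul_mul_smul_comm, smul_mul_smul_comm,
      smul_mul_smul_comm, smul_mul_smul_comm]
    simp only [one_mul, mul_one]
    module
  rw [hexpand]
  linear_combination (norm := module) (SH a * SH b) • hABsplit
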